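/- Assume Samuels' conjecture holds, i.e., for every n ≥ 1, every sequence μ_1 ≥ … ≥ μ_n > 0 with μ_1 + … + μ_n = 1, every δ > 0, and all independent non-negative random variables X_1, …, X_n each with expectation 1, one has P(∑_{i=1}^n μ_i X_i < 1+δ) ≥ min_{1 ≤ i ≤ n} ∏_{j=1}^i (1 − μ_j/((1+δ) − ∑_{k=i+1}^n μ_k)). Then Feige's conjecture holds: for every such n, μ_1 ≥ … ≥ μ_n > 0 with ∑ μ_i = 1, every δ > 0, and all independent non-negative random variables X_1, …, X_n each with expectation 1, one has P(∑_{i=1}^n μ_i X_i < 1+δ) ≥ min(δ/(δ+M), 1/e), where M = μ_1. -/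

import Mathlib

open MeasureTheory ProbabilityTheory Filter Real Set

noncomputable def Fph (M δ t : ℝ) : ℝ := (t - δ)/M * (Real.log (t - M) - Real.log t)
noncomputable def psih (M δ t : ℝ) : ℝ :=
  Real.log (t - M) - Real.log t + (t - δ)*M/(t*(t-M))

lemma hasDerivAt_psih {M δ t : ℝ} (hM : 0 < M) (ht : M < t) :
    HasDerivAt (psih M δ) (M*((2*δ-M)*t - δ*M)/(t*(t-M))^2) t := by
  have ht0 : (0:ℝ) < t := hM.trans ht
  have htM : (0:ℝ) < t - M := sub_pos.2 ht
  have h1 : HasDerivAt (fun x : ℝ => Real.log (x - M)) (1/(t-M)) t := by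
    simpa using ((hasDerivAt_id t).sub_const M).log htM.ne'
  have h2 : HasDerivAt Real.log (1/t) t := by
    simpa [one_div] using Real.hasDerivAt_log ht0.ne'
  have hN : HasDerivAt (fun x : ℝ => (x - δ)*M) M t := by
    simpa using ((hasDerivAt_id t).sub_const δ).mul_const M
  have hD : HasDerivAt (fun x : ℝ => x*(x-M)) (2*t - M) t := by
    have := (hasDerivAt_id t).mul ((hasDerivAt_id t).sub_const M)
    refine this.congr_deriv ?_
    simp [id]
    ring
  have hden : t*(t-M) ≠ 0 := by positivity
  have h3 := hN.div hD hden
  have := (h1.sub h2).add h3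
  refine this.congr_deriv ?_
  field_simp
  ring

lemma hasDerivAt_Fph {M δ t : ℝ} (hM : 0 < M) (ht : M < t) :
    HasDerivAt (Fph M δ) (psih M δ t / M) t := by
  have ht0 : (0:ℝ) < t := hM.trans ht
  have htM : (0:ℝ) < t - M := sub_pos.2 ht
  have h1 : HasDerivAt (fun x : ℝ => Real.log (x - M)) (1/(t-M)) t := by
    simpa using ((hasDerivAt_id t).sub_const M).log htM.ne'
  have h2 : HasDerivAt Real.log (1/t) t := by
    simpa [one_div] using Real.hasDerivAt_log ht0.ne'
  have hA : HasDerivAt (fun x : ℝ => (x - δ)/M) (1/M) t := by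
    simpa using ((hasDerivAt_id t).sub_const δ).div_const M
  have := hA.mul (h1.sub h2)
  refine this.congr_deriv ?_
  simp only [Pi.sub_apply]
  unfold psih
  field_simp
  ring

lemma div_const_tendsto (a : ℝ) : Tendsto (fun t : ℝ => a / t) atTop (nhds 0) := by
  simpa [div_eq_mul_inv] using tendsto_inv_atTop_zero.const_mul a

lemma psih_tendsto {M δ : ℝ} (hM : 0 < M) :
    Tendsto (psih M δ) atTop (nhds 0) := by
  have hratio : Tendsto (fun t : ℝ => (t - M) / t) atTop (nhds 1) := by
    have h : Tendsto (fun t : ℝ => 1 - M / t) atTop (nhds (1 - 0)) :=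
      tendsto_const_nhds.sub (div_const_tendsto M)
    rw [sub_zero] at h
    refine h.congr' ?_
    filter_upwards [eventually_gt_atTop (0:ℝ)] with t ht
    field_simp
  have hlog : Tendsto (fun t : ℝ => Real.log ((t - M)/t)) atTop (nhds 0) := by
    have := ((Real.continuousAt_log one_ne_zero).tendsto).comp hratio
    simpa [Function.comp_def] using this
  have hm : Tendsto (fun t : ℝ => M / (t - M)) atTop (nhds 0) := by
    have := (div_const_tendsto M).comp (tendsto_atTop_add_const_right atTop (-M) tendsto_id)
    simpa [Function.comp_def, sub_eq_add_neg] using this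
  have hr2 : Tendsto (fun t : ℝ => (t - δ) / t) atTop (nhds 1) := by
    have h : Tendsto (fun t : ℝ => 1 - δ / t) atTop (nhds (1 - 0)) :=
      tendsto_const_nhds.sub (div_const_tendsto δ)
    rw [sub_zero] at h
    refine h.congr' ?_
    filter_upwards [eventually_gt_atTop (0:ℝ)] with t ht
    field_simp
  have htot : Tendsto (fun t : ℝ => Real.log ((t - M)/t) + ((t - δ)/t) * (M/(t-M)))
      atTop (nhds (0 + 1 * 0)) := hlog.add (hr2.mul hm)
  rw [show (0:ℝ) + 1 * 0 = 0 by ring] at htot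
  refine htot.congr' ?_
  filter_upwards [eventually_gt_atTop (max M 0)] with t ht
  have htM : M < t := (le_max_left _ _).trans_lt ht
  have ht0 : (0:ℝ) < t := (le_max_right _ _).trans_lt ht
  have h1 : t - M ≠ 0 := (sub_pos.2 htM).ne'
  unfold psih
  rw [Real.log_div h1 ht0.ne']
  field_simp

lemma Fph_tendsto {M δ : ℝ} (hM : 0 < M) :
    Tendsto (Fph M δ) atTop (nhds (-1)) := by
  have h1 : Tendsto (fun t : ℝ => t * Real.log (1 + (-M)/t)) atTop (nhds (-M)) :=
    Real.tendsto_mul_log_one_add_div_atTop (-M)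
  have hl0 : Tendsto (fun t : ℝ => Real.log (1 + (-M)/t)) atTop (nhds 0) := by
    have hb : Tendsto (fun t : ℝ => 1 + (-M)/t) atTop (nhds (1 + 0)) :=
      tendsto_const_nhds.add (div_const_tendsto (-M))
    rw [add_zero] at hb
    have := ((Real.continuousAt_log one_ne_zero).tendsto).comp hb
    simpa [Function.comp_def] using this
  have htot : Tendsto (fun t : ℝ => (1/M) * (t * Real.log (1 + (-M)/t))
      - (δ/M) * Real.log (1 + (-M)/t)) atTop (nhds ((1/M) * (-M) - (δ/M) * 0)) :=
    (tendsto_const_nhds.mul h1).sub (tendsto_const_nhds.mul hl0)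
  rw [show (1/M) * (-M) - (δ/M) * 0 = -1 by field_simp; ring] at htot
  refine htot.congr' ?_
  filter_upwards [eventually_gt_atTop (max M 0)] with t ht
  have htM : M < t := (le_max_left _ _).trans_lt ht
  have ht0 : (0:ℝ) < t := (le_max_right _ _).trans_lt ht
  have h1' : t - M ≠ 0 := (sub_pos.2 htM).ne'
  have he : 1 + (-M)/t = (t - M)/t := by
    field_simp
    ring
  unfold Fph
  rw [he, Real.log_div h1' ht0.ne']
  field_simp

lemma psih_upward {M δ c u : ℝ} (hM : 0 < M) (hδ : 0 < δ) (hc : M < c) (hcu : c ≤ u)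
    (h : psih M δ c ≤ 0) : psih M δ u ≤ 0 := by
  have hu : M < u := hc.trans_le hcu
  have hu0 : (0:ℝ) < u := hM.trans hu
  by_cases hl : 0 ≤ (2*δ - M)*u - δ*M
  · -- psih is monotone on [u, ∞) and tends to 0
    have h2δ : 0 ≤ 2*δ - M := by
      by_contra hcon
      push_neg at hcon
      nlinarith
    have hmono : MonotoneOn (psih M δ) (Set.Ici u) := by
      apply monotoneOn_of_deriv_nonneg (convex_Ici u)
      · intro x hx
        exact (hasDerivAt_psih hM (hu.trans_le hx)).continuousAt.continuousWithinAt
      · intro x hx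
        rw [interior_Ici] at hx
        exact (hasDerivAt_psih hM (hu.trans hx)).differentiableAt.differentiableWithinAt
      · intro x hx
        rw [interior_Ici] at hx
        have hxu : u < x := hx
        rw [(hasDerivAt_psih hM (hu.trans hxu)).deriv]
        apply div_nonneg _ (sq_nonneg _)
        have : (2*δ - M)*u ≤ (2*δ - M)*x := by nlinarith
        nlinarith
    refine ge_of_tendsto (psih_tendsto (δ := δ) hM) ?_
    filter_upwards [eventually_ge_atTop u] with x hx
    exact hmono (Set.self_mem_Ici) hx hx
  · push_neg at hl
    have hanti : AntitoneOn (psih M δ) (Set.Icc c u) := by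
      apply antitoneOn_of_deriv_nonpos (convex_Icc c u)
      · intro x hx
        exact (hasDerivAt_psih hM (hc.trans_le hx.1)).continuousAt.continuousWithinAt
      · intro x hx
        rw [interior_Icc] at hx
        exact (hasDerivAt_psih hM (hc.trans hx.1)).differentiableAt.differentiableWithinAt
      · intro x hx
        rw [interior_Icc] at hx
        have hx0 : (0:ℝ) < x := hM.trans (hc.trans hx.1)
        rw [(hasDerivAt_psih hM (hc.trans hx.1)).deriv]
        apply div_nonpos_of_nonpos_of_nonneg _ (sq_nonneg _)
        rcases le_or_gt 0 (2*δ - M) with h2 | h2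
        · have hxx : (2*δ - M)*x ≤ (2*δ - M)*u := mul_le_mul_of_nonneg_left hx.2.le h2
          nlinarith
        · have hxx : (2*δ - M)*x < 0 := mul_neg_of_neg_of_pos h2 hx0
          nlinarith [mul_pos hM (show (0:ℝ) < δ*M - (2*δ - M)*x by nlinarith)]
    calc psih M δ u ≤ psih M δ c := hanti ⟨le_refl c, hcu⟩ ⟨hcu, le_refl u⟩ hcu
    _ ≤ 0 := h

lemma Fph_lower {M δ t : ℝ} (hM : 0 < M) (hδ : 0 < δ) (ht : δ + M ≤ t) :
    min (Real.log (δ/(δ+M))) (-1) ≤ Fph M δ t := by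
  have hMt : M < t := by linarith
  by_cases h : ∃ c ∈ Set.Icc (δ + M) t, psih M δ c ≤ 0
  · obtain ⟨c, hcmem, hc0⟩ := h
    have hcM : M < c := by
      have := hcmem.1; linarith
    have hanti : AntitoneOn (Fph M δ) (Set.Ici t) := by
      apply antitoneOn_of_deriv_nonpos (convex_Ici t)
      · intro x hx
        exact (hasDerivAt_Fph hM (hMt.trans_le hx)).continuousAt.continuousWithinAt
      · intro x hx
        rw [interior_Ici] at hx
        exact (hasDerivAt_Fph hM (hMt.trans hx)).differentiableAt.differentiableWithinAt
      · intro x hx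
        rw [interior_Ici] at hx
        rw [(hasDerivAt_Fph hM (hMt.trans hx)).deriv]
        apply div_nonpos_of_nonpos_of_nonneg _ hM.le
        exact psih_upward hM hδ hcM (hcmem.2.trans (le_of_lt hx)) hc0
    have hm1 : (-1 : ℝ) ≤ Fph M δ t := by
      refine le_of_tendsto (Fph_tendsto (δ := δ) hM) ?_
      filter_upwards [eventually_ge_atTop t] with x hx
      exact hanti (Set.self_mem_Ici) hx hx
    exact le_trans (min_le_right _ _) hm1
  · push_neg at h
    have hmono : MonotoneOn (Fph M δ) (Set.Icc (δ + M) t) := by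
      apply monotoneOn_of_deriv_nonneg (convex_Icc _ _)
      · intro x hx
        have : M < x := by have := hx.1; linarith
        exact (hasDerivAt_Fph hM this).continuousAt.continuousWithinAt
      · intro x hx
        rw [interior_Icc] at hx
        have : M < x := by have := hx.1; linarith
        exact (hasDerivAt_Fph hM this).differentiableAt.differentiableWithinAt
      · intro x hx
        rw [interior_Icc] at hx
        have hMx : M < x := by have := hx.1; linarith
        rw [(hasDerivAt_Fph hM hMx).deriv]
        apply div_nonneg _ hM.le
        exact le_of_lt (h x ⟨hx.1.le, hx.2.le⟩)
    have hF0 : Fph M δ (δ + M) = Real.log (δ/(δ+M)) := by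
      unfold Fph
      rw [show δ + M - δ = M by ring, show δ + M - M = δ by ring, div_self hM.ne',
        one_mul, Real.log_div hδ.ne' (by positivity)]
    calc min (Real.log (δ/(δ+M))) (-1) ≤ Real.log (δ/(δ+M)) := min_le_left _ _
    _ = Fph M δ (δ + M) := hF0.symm
    _ ≤ Fph M δ t := hmono ⟨le_refl _, ht⟩ ⟨ht, le_refl t⟩ ht

lemma chord_log {t c x : ℝ} (hc : 0 < c) (hx0 : 0 ≤ x) (hxc : x ≤ c) (hct : c < t) :
    (x/c) * (Real.log (t - c) - Real.log t) ≤ Real.log (t - x) - Real.log t := by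
  have ht0 : (0:ℝ) < t := hc.trans hct
  have htc : (0:ℝ) < t - c := sub_pos.2 hct
  have hb0 : 0 ≤ x / c := div_nonneg hx0 hc.le
  have hb1 : x / c ≤ 1 := (div_le_one hc).2 hxc
  have key := strictConcaveOn_log_Ioi.concaveOn.2 (Set.mem_Ioi.2 ht0) (Set.mem_Ioi.2 htc)
    (by linarith : (0:ℝ) ≤ 1 - x/c) hb0 (by ring)
  have hcomb : (1 - x/c) • t + (x/c) • (t - c) = t - x := by
    rw [smul_eq_mul, smul_eq_mul]
    field_simp
    ring
  rw [hcomb] at key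
  have : (1 - x/c) * Real.log t + (x/c) * Real.log (t - c) ≤ Real.log (t - x) := by
    simpa [smul_eq_mul] using key
  nlinarith [this]

/-- Samuels' conjecture implies Feige's conjecture. -/
theorem samuels_implies_feige :
    -- Samuels' conjecture:
    (∀ (Ω : Type) (_ : MeasurableSpace Ω) (P : Measure Ω), IsProbabilityMeasure P →
      ∀ (n : ℕ) (hn : 0 < n) (μ : Fin n → ℝ), Antitone μ → (∀ i, 0 < μ i) →
        ∑ i, μ i = 1 → ∀ δ : ℝ, 0 < δ →
        ∀ X : Fin n → Ω → ℝ, (∀ i, Measurable (X i)) →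
          (∀ i ω, 0 ≤ X i ω) → (∀ i, ∫ ω, X i ω ∂P = 1) →
          iIndepFun X P →
          Finset.univ.inf' (Finset.univ_nonempty_iff.mpr ⟨⟨0, hn⟩⟩)
              (fun i : Fin n =>
                ∏ j ∈ Finset.Iic i,
                  (1 - μ j / ((1 + δ) - ∑ k ∈ Finset.Ioi i, μ k))) ≤
            (P {ω | ∑ i, μ i * X i ω < 1 + δ}).toReal) →
    -- Feige's conjecture:
    ∀ (Ω : Type) (_ : MeasurableSpace Ω) (P : Measure Ω), IsProbabilityMeasure P →
      ∀ (n : ℕ) (hn : 0 < n) (μ : Fin n → ℝ), Antitone μ → (∀ i, 0 < μ i) →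
        ∑ i, μ i = 1 → ∀ δ : ℝ, 0 < δ →
        ∀ X : Fin n → Ω → ℝ, (∀ i, Measurable (X i)) →
          (∀ i ω, 0 ≤ X i ω) → (∀ i, ∫ ω, X i ω ∂P = 1) →
          iIndepFun X P →
          min (δ / (δ + μ ⟨0, hn⟩)) (1 / Real.exp 1) ≤
            (P {ω | ∑ i, μ i * X i ω < 1 + δ}).toReal := by
  intro hSam Ω mΩ P hP n hn μ hmono hpos hsum δ hδ X hXm hX0 hXint hind
  refine le_trans ?_ (hSam Ω mΩ P hP n hn μ hmono hpos hsum δ hδ X hXm hX0 hXint hind)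
  apply Finset.le_inf'
  intro i _
  set M : ℝ := μ ⟨0, hn⟩ with hMdef
  have hM : 0 < M := hpos _
  set s : ℝ := ∑ j ∈ Finset.Iic i, μ j with hsdef
  have hsplit : s + ∑ k ∈ Finset.Ioi i, μ k = 1 := by
    rw [hsdef, ← hsum, ← Finset.sum_union]
    · congr 1
      ext x
      simp [Finset.mem_Iic, Finset.mem_Ioi, le_or_gt]
    · rw [Finset.disjoint_left]
      intro a ha ha'
      exact absurd (Finset.mem_Ioi.mp ha') (not_lt.mpr (Finset.mem_Iic.mp ha))
  have htdef : (1 + δ) - ∑ k ∈ Finset.Ioi i, μ k = δ + s := by linarith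
  rw [htdef]
  set t : ℝ := δ + s with htd
  have hjle : ∀ j, μ j ≤ M := fun j => hmono (Fin.le_def.mpr (Nat.zero_le _))
  have hMs : M ≤ s := by
    refine Finset.single_le_sum (fun j _ => (hpos j).le) ?_
    exact Finset.mem_Iic.mpr (Fin.le_def.mpr (Nat.zero_le _))
  have htlb : δ + M ≤ t := by rw [htd]; linarith
  have htM : M < t := by linarith
  have ht0 : (0:ℝ) < t := hM.trans htM
  have hfac : ∀ j : Fin n, 0 < 1 - μ j / t := by
    intro j
    have : μ j / t < 1 := (div_lt_one ht0).2 ((hjle j).trans_lt htM)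
    linarith
  have hprodpos : 0 < ∏ j ∈ Finset.Iic i, (1 - μ j / t) :=
    Finset.prod_pos fun j _ => hfac j
  have hlogprod : Real.log (∏ j ∈ Finset.Iic i, (1 - μ j / t))
      = ∑ j ∈ Finset.Iic i, Real.log (1 - μ j / t) :=
    Real.log_prod fun j _ => (hfac j).ne'
  have hterm : ∀ j ∈ Finset.Iic i,
      (μ j / M) * (Real.log (t - M) - Real.log t) ≤ Real.log (1 - μ j / t) := by
    intro j _
    have h1 : 1 - μ j / t = (t - μ j) / t := by field_simp
    have h2 : Real.log ((t - μ j) / t) = Real.log (t - μ j) - Real.log t := by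
      have : (0:ℝ) < t - μ j := by
        have := (hjle j).trans_lt htM; linarith
      exact Real.log_div this.ne' ht0.ne'
    rw [h1, h2]
    exact chord_log hM (hpos j).le (hjle j) htM
  have hsumlog : (s / M) * (Real.log (t - M) - Real.log t)
      ≤ ∑ j ∈ Finset.Iic i, Real.log (1 - μ j / t) := by
    calc (s / M) * (Real.log (t - M) - Real.log t)
        = ∑ j ∈ Finset.Iic i, (μ j / M) * (Real.log (t - M) - Real.log t) := by
          rw [← Finset.sum_mul, ← Finset.sum_div, hsdef]
      _ ≤ _ := Finset.sum_le_sum hterm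
  have hF : Fph M δ t = (s / M) * (Real.log (t - M) - Real.log t) := by
    unfold Fph
    rw [htd, show δ + s - δ = s by ring]
  have hlower : min (Real.log (δ/(δ+M))) (-1)
      ≤ Real.log (∏ j ∈ Finset.Iic i, (1 - μ j / t)) := by
    rw [hlogprod]
    exact le_trans (Fph_lower hM hδ htlb) (hF ▸ (hF.symm ▸ hsumlog))
  have hminexp : min (δ / (δ + M)) (1 / Real.exp 1)
      = Real.exp (min (Real.log (δ/(δ+M))) (-1)) := by
    rw [Real.exp_monotone.map_min, Real.exp_log (by positivity), Real.exp_neg, one_div]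
  calc min (δ / (δ + M)) (1 / Real.exp 1)
      = Real.exp (min (Real.log (δ/(δ+M))) (-1)) := hminexp
    _ ≤ Real.exp (Real.log (∏ j ∈ Finset.Iic i, (1 - μ j / t))) := Real.exp_le_exp.2 hlower
    _ = ∏ j ∈ Finset.Iic i, (1 - μ j / t) := Real.exp_log hprodpos
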